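/- In 𝔰𝔩₃(ℝ), the normalizer of the subalgebra 𝔩_{[1:1]} = {s(E₁₂ + E₂₃) + tE₁₃ : s, t ∈ ℝ} in SL₃(ℝ) equals the group B' of upper triangular matrices diag entries (a,b,c) (with arbitrary strictly upper entries) satisfying a/b = b/c and abc = 1. -/

import Mathlib

open Matrix

noncomputable section

/-- Elementary matrix `Eᵢⱼ` in `M₃(ℝ)`. -/
def E (i j : Fin 3) : Matrix (Fin 3) (Fin 3) ℝ := Matrix.single i j 1

/-- The subalgebra `𝔩_{[1:1]} = {s(E₁₂ + E₂₃) + t E₁₃}`. -/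
def L11 : Set (Matrix (Fin 3) (Fin 3) ℝ) :=
  {M | ∃ s t : ℝ, M = s • (E 0 1 + E 1 2) + t • E 0 2}

lemma inv_tri (A B : Matrix (Fin 3) (Fin 3) ℝ) (hAB : A * B = 1)
    (h10 : A 1 0 = 0) (h20 : A 2 0 = 0) (h21 : A 2 1 = 0)
    (hdet : A 0 0 * A 1 1 * A 2 2 = 1) :
    B = !![A 1 1 * A 2 2, -(A 0 1 * A 2 2), A 0 1 * A 1 2 - A 0 2 * A 1 1;
      0, A 0 0 * A 2 2, -(A 0 0 * A 1 2); 0, 0, A 0 0 * A 1 1] := by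
  have h1 : A * !![A 1 1 * A 2 2, -(A 0 1 * A 2 2), A 0 1 * A 1 2 - A 0 2 * A 1 1;
      0, A 0 0 * A 2 2, -(A 0 0 * A 1 2); 0, 0, A 0 0 * A 1 1] = 1 := by
    ext i j
    fin_cases i <;> fin_cases j <;>
      simp [mul_apply, Fin.sum_univ_three, h10, h20, h21, Matrix.one_apply, Matrix.cons_val',
        Matrix.cons_val_zero, Matrix.cons_val_one, Matrix.head_cons, Matrix.empty_val',
        Matrix.cons_val_fin_one, Matrix.head_fin_const, Matrix.vecHead, Matrix.vecTail,
        -mul_eq_zero] <;>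
      first | ring1 | linear_combination hdet
  have hBA := mul_eq_one_comm.mp hAB
  calc B = B * (A * _) := by rw [h1, mul_one]
  _ = (B * A) * _ := by rw [Matrix.mul_assoc]
  _ = _ := by rw [hBA, Matrix.one_mul]

lemma key (A B : Matrix (Fin 3) (Fin 3) ℝ) (hAB : A * B = 1)
    (h10 : A 1 0 = 0) (h20 : A 2 0 = 0) (h21 : A 2 1 = 0)
    (hdet : A 0 0 * A 1 1 * A 2 2 = 1) (hb : A 0 0 * A 2 2 = A 1 1 * A 1 1)
    (s t : ℝ) : A * (s • (E 0 1 + E 1 2) + t • E 0 2) * B ∈ L11 := by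
  have hBmat := inv_tri A B hAB h10 h20 h21 hdet
  subst hBmat
  refine ⟨s * (A 0 0 * A 0 0 * A 2 2),
    -(s * (A 0 0 * A 0 0 * A 1 2)) + (s * A 0 1 + t * A 0 0) * (A 0 0 * A 1 1), ?_⟩
  ext i j
  fin_cases i <;> fin_cases j <;>
    simp [mul_apply, Fin.sum_univ_three, E, Matrix.single, h10, h20, h21,
      Matrix.cons_val', Matrix.cons_val_zero, Matrix.cons_val_one, Matrix.head_cons,
      Matrix.empty_val', Matrix.cons_val_fin_one, Matrix.head_fin_const, Matrix.vecHead,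
      Matrix.vecTail, -mul_eq_zero] <;>
    first
      | ring1
      | linear_combination s * A 0 0 * hb
      | linear_combination (-(s * A 0 0)) * hb

theorem stmt4 (g : Matrix.SpecialLinearGroup (Fin 3) ℝ) :
    ((fun X => (g : Matrix (Fin 3) (Fin 3) ℝ) * X * ((g⁻¹ : Matrix.SpecialLinearGroup (Fin 3) ℝ) :
        Matrix (Fin 3) (Fin 3) ℝ)) '' L11 = L11) ↔
      ((g : Matrix (Fin 3) (Fin 3) ℝ) 1 0 = 0 ∧
       (g : Matrix (Fin 3) (Fin 3) ℝ) 2 0 = 0 ∧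
       (g : Matrix (Fin 3) (Fin 3) ℝ) 2 1 = 0 ∧
       (g : Matrix (Fin 3) (Fin 3) ℝ) 0 0 / (g : Matrix (Fin 3) (Fin 3) ℝ) 1 1 =
         (g : Matrix (Fin 3) (Fin 3) ℝ) 1 1 / (g : Matrix (Fin 3) (Fin 3) ℝ) 2 2) := by
  set A : Matrix (Fin 3) (Fin 3) ℝ := (g : Matrix (Fin 3) (Fin 3) ℝ) with hA
  set B : Matrix (Fin 3) (Fin 3) ℝ :=
    ((g⁻¹ : Matrix.SpecialLinearGroup (Fin 3) ℝ) : Matrix (Fin 3) (Fin 3) ℝ) with hB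
  have hAB : A * B = 1 := by
    rw [hA, hB, ← Matrix.SpecialLinearGroup.coe_mul, mul_inv_cancel,
      Matrix.SpecialLinearGroup.coe_one]
  have hBA := mul_eq_one_comm.mp hAB
  have hdet : A.det = 1 := g.2
  rw [Matrix.det_fin_three] at hdet
  have hE02 : E 0 2 ∈ L11 := ⟨0, 1, by simp⟩
  have hNmem : E 0 1 + E 1 2 ∈ L11 := ⟨1, 0, by simp⟩
  constructor
  · intro h
    -- conjugate of E 0 2
    have hm : A * E 0 2 * B ∈ L11 := by rw [← h]; exact ⟨E 0 2, hE02, rfl⟩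
    obtain ⟨s, t, hst⟩ := hm
    have hE2 : E 0 2 * E 0 2 = (0 : Matrix (Fin 3) (Fin 3) ℝ) := by
      ext i j
      fin_cases i <;> fin_cases j <;>
        simp [E, mul_apply, Fin.sum_univ_three, Matrix.single]
    have hsq : (s • (E 0 1 + E 1 2) + t • E 0 2) * (s • (E 0 1 + E 1 2) + t • E 0 2)
        = (0 : Matrix (Fin 3) (Fin 3) ℝ) := by
      rw [← hst]
      calc A * E 0 2 * B * (A * E 0 2 * B)
          = A * (E 0 2 * ((B * A) * (E 0 2 * B))) := by
            simp only [Matrix.mul_assoc]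
        _ = A * (E 0 2 * (E 0 2 * B)) := by rw [hBA, Matrix.one_mul]
        _ = A * ((E 0 2 * E 0 2) * B) := by rw [Matrix.mul_assoc]
        _ = 0 := by rw [hE2, Matrix.zero_mul, Matrix.mul_zero]
    have hs0 : s = 0 := by
      have h02 := congrFun (congrFun hsq 0) 2
      simp [E, mul_apply, Fin.sum_univ_three, Matrix.single, -mul_eq_zero] at h02
      nlinarith [h02]
    subst hs0
    rw [zero_smul, zero_add] at hst
    have hst' : A * E 0 2 = t • (E 0 2 * A) := by
      calc A * E 0 2 = A * E 0 2 * (B * A) := by rw [hBA, Matrix.mul_one]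
      _ = (A * E 0 2 * B) * A := by rw [← Matrix.mul_assoc]
      _ = t • (E 0 2 * A) := by rw [hst, Matrix.smul_mul]
    have e10 : A 1 0 = 0 := by
      have := congrFun (congrFun hst' 1) 2
      simpa [E, mul_apply, Fin.sum_univ_three, Matrix.single] using this
    have e20 : A 2 0 = 0 := by
      have := congrFun (congrFun hst' 2) 2
      simpa [E, mul_apply, Fin.sum_univ_three, Matrix.single] using this
    have e00 : A 0 0 = t * A 2 2 := by
      have := congrFun (congrFun hst' 0) 2
      simpa [E, mul_apply, Fin.sum_univ_three, Matrix.single] using this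
    have e01 : 0 = t * A 2 1 := by
      have := congrFun (congrFun hst' 0) 1
      simpa [E, mul_apply, Fin.sum_univ_three, Matrix.single] using this
    have ht : t ≠ 0 := by
      rintro rfl
      rw [zero_mul] at e00
      rw [e00, e10, e20] at hdet
      simp at hdet
    have e21 : A 2 1 = 0 := by
      field_simp [ht] at e01
      exact (mul_eq_zero.mp e01.symm).resolve_left ht
    -- conjugate of N
    have hm2 : A * (E 0 1 + E 1 2) * B ∈ L11 := by rw [← h]; exact ⟨E 0 1 + E 1 2, hNmem, rfl⟩
    obtain ⟨s', t', hN⟩ := hm2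
    have hN' : A * (E 0 1 + E 1 2) = (s' • (E 0 1 + E 1 2) + t' • E 0 2) * A := by
      calc A * (E 0 1 + E 1 2) = A * (E 0 1 + E 1 2) * (B * A) := by rw [hBA, Matrix.mul_one]
      _ = (A * (E 0 1 + E 1 2) * B) * A := by rw [← Matrix.mul_assoc]
      _ = _ := by rw [hN]
    have f01 : A 0 0 = s' * A 1 1 + t' * A 2 1 := by
      have := congrFun (congrFun hN' 0) 1
      simpa [E, mul_apply, Fin.sum_univ_three, Matrix.single] using this
    have f12 : A 1 1 = s' * A 2 2 := by
      have := congrFun (congrFun hN' 1) 2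
      simpa [E, mul_apply, Fin.sum_univ_three, Matrix.single, e10] using this
    rw [e21, mul_zero, add_zero] at f01
    have hdet3 : A 0 0 * A 1 1 * A 2 2 = 1 := by
      rw [e10, e20, e21] at hdet; simpa using hdet
    have h11 : A 1 1 ≠ 0 := by
      intro hz; rw [hz] at hdet3; simp at hdet3
    have h22 : A 2 2 ≠ 0 := by
      intro hz; rw [hz] at hdet3; simp at hdet3
    refine ⟨e10, e20, e21, ?_⟩
    rw [div_eq_div_iff h11 h22]
    linear_combination A 2 2 * f01 - A 1 1 * f12
  · rintro ⟨c10, c20, c21, cdiv⟩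
    have hdet3 : A 0 0 * A 1 1 * A 2 2 = 1 := by
      rw [c10, c20, c21] at hdet; simpa using hdet
    have h11 : A 1 1 ≠ 0 := by intro hz; rw [hz] at hdet3; simp at hdet3
    have h22 : A 2 2 ≠ 0 := by intro hz; rw [hz] at hdet3; simp at hdet3
    have hb : A 0 0 * A 2 2 = A 1 1 * A 1 1 := by
      rw [div_eq_div_iff h11 h22] at cdiv; linarith [cdiv]
    have hBmat := inv_tri A B hAB c10 c20 c21 hdet3
    have b10 : B 1 0 = 0 := by rw [hBmat]; simp [Matrix.cons_val', Matrix.cons_val_zero, Matrix.cons_val_one, Matrix.head_cons, Matrix.empty_val', Matrix.cons_val_fin_one, Matrix.head_fin_const, Matrix.vecHead, Matrix.vecTail]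
    have b20 : B 2 0 = 0 := by rw [hBmat]; simp [Matrix.cons_val', Matrix.cons_val_zero, Matrix.cons_val_one, Matrix.head_cons, Matrix.empty_val', Matrix.cons_val_fin_one, Matrix.head_fin_const, Matrix.vecHead, Matrix.vecTail]
    have b21 : B 2 1 = 0 := by rw [hBmat]; simp [Matrix.cons_val', Matrix.cons_val_zero, Matrix.cons_val_one, Matrix.head_cons, Matrix.empty_val', Matrix.cons_val_fin_one, Matrix.head_fin_const, Matrix.vecHead, Matrix.vecTail]
    have b00 : B 0 0 = A 1 1 * A 2 2 := by rw [hBmat]; simp [Matrix.cons_val', Matrix.cons_val_zero, Matrix.cons_val_one, Matrix.head_cons, Matrix.empty_val', Matrix.cons_val_fin_one, Matrix.head_fin_const, Matrix.vecHead, Matrix.vecTail]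
    have b11 : B 1 1 = A 0 0 * A 2 2 := by rw [hBmat]; simp [Matrix.cons_val', Matrix.cons_val_zero, Matrix.cons_val_one, Matrix.head_cons, Matrix.empty_val', Matrix.cons_val_fin_one, Matrix.head_fin_const, Matrix.vecHead, Matrix.vecTail]
    have b22 : B 2 2 = A 0 0 * A 1 1 := by rw [hBmat]; simp [Matrix.cons_val', Matrix.cons_val_zero, Matrix.cons_val_one, Matrix.head_cons, Matrix.empty_val', Matrix.cons_val_fin_one, Matrix.head_fin_const, Matrix.vecHead, Matrix.vecTail]
    have bdet : B 0 0 * B 1 1 * B 2 2 = 1 := by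
      rw [b00, b11, b22]
      linear_combination (A 0 0 * A 1 1 * A 2 2 + 1) * hdet3
    have bb : B 0 0 * B 2 2 = B 1 1 * B 1 1 := by
      rw [b00, b11, b22]
      linear_combination (-(A 0 0 * A 2 2)) * hb
    ext X
    constructor
    · rintro ⟨Y, ⟨s, t, rfl⟩, rfl⟩
      exact key A B hAB c10 c20 c21 hdet3 hb s t
    · rintro ⟨s, t, rfl⟩
      refine ⟨B * (s • (E 0 1 + E 1 2) + t • E 0 2) * A,
        key B A hBA b10 b20 b21 bdet bb s t, ?_⟩
      show A * (B * (s • (E 0 1 + E 1 2) + t • E 0 2) * A) * B = _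
      calc A * (B * (s • (E 0 1 + E 1 2) + t • E 0 2) * A) * B
          = (A * B) * ((s • (E 0 1 + E 1 2) + t • E 0 2) * (A * B)) := by
            simp only [Matrix.mul_assoc]
        _ = _ := by rw [hAB, Matrix.mul_one, Matrix.one_mul]
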